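/- Let n ≥ 68k, p = 2k/n, and let V_1, ..., V_ℓ ⊆ [n] with ℓ ≤ n and |V_i| = r_i ≥ 2 for all i. If A is a random subset of [n] including each element independently with probability p, A' is obtained from A by removing every j with {j, j+1 (mod n)} ⊆ A, and A'' is obtained from A' by removing, for each i with |A' ∩ V_i| > r_i/2, exactly |A' ∩ V_i| − ⌊r_i/2⌋ elements of V_i, then E[|A''|] ≥ (p − 17p²)·n ≥ k. -/
import Mathlib

open Finset

private lemma Lsum (Ω : Finset ℕ) (p : ℝ) :
    ∑ A ∈ Ω.powerset, p ^ A.card * (1 - p) ^ (Ω.card - A.card) = 1 := by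
  calc ∑ A ∈ Ω.powerset, p ^ A.card * (1 - p) ^ (Ω.card - A.card)
      = ∑ A ∈ Ω.powerset, (∏ _i ∈ A, p) * ∏ _i ∈ Ω \ A, (1 - p) := by
        refine Finset.sum_congr rfl fun A hA => ?_
        rw [Finset.prod_const, Finset.prod_const,
          Finset.card_sdiff_of_subset (Finset.mem_powerset.mp hA)]
    _ = ∏ _i ∈ Ω, (p + (1 - p)) := (Finset.prod_add _ _ _).symm
    _ = 1 := by simp

private lemma Lind (Ω : Finset ℕ) (p : ℝ) (S : Finset ℕ) (hS : S ⊆ Ω) :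
    ∑ A ∈ Ω.powerset, p ^ A.card * (1 - p) ^ (Ω.card - A.card) *
      (if S ⊆ A then (1:ℝ) else 0) = p ^ S.card := by
  simp only [mul_ite, mul_one, mul_zero]
  rw [← Finset.sum_filter]
  have key : ∑ B ∈ (Ω \ S).powerset, p ^ B.card * (1 - p) ^ ((Ω \ S).card - B.card) = 1 :=
    Lsum _ _
  have main : ∑ A ∈ (Ω.powerset.filter (fun A => S ⊆ A)), p ^ A.card * (1 - p) ^ (Ω.card - A.card)
      = ∑ B ∈ (Ω \ S).powerset, p ^ S.card * (p ^ B.card * (1 - p) ^ ((Ω \ S).card - B.card)) := by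
    refine Finset.sum_nbij' (fun A => A \ S) (fun B => B ∪ S) ?_ ?_ ?_ ?_ ?_
    · intro A hA
      simp only [Finset.mem_filter, Finset.mem_powerset] at hA
      exact Finset.mem_powerset.mpr (Finset.sdiff_subset_sdiff hA.1 le_rfl)
    · intro B hB
      simp only [Finset.mem_powerset] at hB
      simp only [Finset.mem_filter, Finset.mem_powerset]
      constructor
      · exact Finset.union_subset (hB.trans Finset.sdiff_subset) hS
      · exact Finset.subset_union_right
    · intro A hA
      simp only [Finset.mem_filter, Finset.mem_powerset] at hA
      exact Finset.sdiff_union_of_subset hA.2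
    · intro B hB
      simp only [Finset.mem_powerset] at hB
      have hd : Disjoint B S := Finset.disjoint_of_subset_left hB Finset.sdiff_disjoint
      show (B ∪ S) \ S = B
      rw [Finset.union_sdiff_right, Finset.sdiff_eq_self_of_disjoint hd]
    · intro A hA
      simp only [Finset.mem_filter, Finset.mem_powerset] at hA
      obtain ⟨hAΩ, hSA⟩ := hA
      have h1 : (A \ S).card = A.card - S.card := Finset.card_sdiff_of_subset hSA
      have h2 : (Ω \ S).card = Ω.card - S.card := Finset.card_sdiff_of_subset hS
      have h3 : S.card ≤ A.card := Finset.card_le_card hSA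
      have h4 : A.card ≤ Ω.card := Finset.card_le_card hAΩ
      have h5 : A.card = S.card + (A \ S).card := by omega
      show p ^ A.card * (1 - p) ^ (Ω.card - A.card)
        = p ^ S.card * (p ^ (A \ S).card * (1 - p) ^ ((Ω \ S).card - (A \ S).card))
      rw [h5, pow_add]
      have h6 : Ω.card - (S.card + (A \ S).card) = (Ω \ S).card - (A \ S).card := by omega
      rw [h6]; ring
  rw [main, ← Finset.mul_sum, key, mul_one]

private lemma choose_ge_sub (m t : ℕ) : m - t ≤ m.choose (t + 1) := by
  induction m with
  | zero => simp
  | succ m ih =>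
    rw [Nat.choose_succ_succ']
    rcases le_or_gt t m with h | h
    · have h1 : 0 < m.choose t := Nat.choose_pos h
      omega
    · omega

private lemma choose_le_two_pow (r s : ℕ) : r.choose s ≤ 2 ^ r := by
  rcases le_or_gt s r with h | h
  · calc r.choose s ≤ ∑ i ∈ Finset.range (r + 1), r.choose i :=
        Finset.single_le_sum (fun i _ => Nat.zero_le _)
          (Finset.mem_range.mpr (by omega))
      _ = 2 ^ r := Nat.sum_range_choose r
  · rw [Nat.choose_eq_zero_of_lt h]; exact Nat.zero_le _

theorem stmt19 (n k ℓ : ℕ) (hn : 68 * k ≤ n) (hℓ : ℓ ≤ n)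
    (V : Fin ℓ → Finset ℕ) (hV : ∀ i, V i ⊆ Finset.Icc 1 n)
    (hV2 : ∀ i, 2 ≤ (V i).card)
    (p : ℝ) (hp : p = 2 * k / n)
    (A' : Finset ℕ → Finset ℕ)
    (hA' : ∀ A : Finset ℕ,
      A' A = A.filter (fun j => ¬ ((if j = n then 1 else j + 1) ∈ A)))
    (R : Finset ℕ → Fin ℓ → Finset ℕ)
    (hR1 : ∀ A i, R A i ⊆ A' A ∩ V i)
    (hR2 : ∀ A i, (R A i).card = (A' A ∩ V i).card - (V i).card / 2)
    (A'' : Finset ℕ → Finset ℕ)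
    (hA'' : ∀ A : Finset ℕ, A'' A = A' A \ Finset.univ.biUnion (R A)) :
    (k : ℝ) ≤ (p - 17 * p ^ 2) * n ∧
    (p - 17 * p ^ 2) * n ≤
      ∑ A ∈ (Finset.Icc 1 n).powerset,
        p ^ A.card * (1 - p) ^ (n - A.card) * ((A'' A).card : ℝ) := by
  by_cases hk : k = 0
  · subst hk
    have hp0 : p = 0 := by rw [hp]; simp
    subst hp0
    constructor
    · norm_num
    · refine le_trans (by norm_num) (Finset.sum_nonneg fun A _ => ?_)
      positivity
  -- main case
  have hk1 : 1 ≤ k := Nat.one_le_iff_ne_zero.mpr hk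
  have hn68 : 68 ≤ n := le_trans (by omega) hn
  have hnR : (0:ℝ) < n := by
    have : 0 < n := by omega
    exact_mod_cast this
  have hkR : (1:ℝ) ≤ k := by exact_mod_cast hk1
  have hpn : p * n = 2 * k := by rw [hp]; field_simp
  have hp0 : 0 ≤ p := by rw [hp]; positivity
  have hp34 : p ≤ 1 / 34 := by
    rw [hp, div_le_div_iff₀ hnR (by norm_num)]
    have h68 : (68:ℝ) * k ≤ n := by exact_mod_cast hn
    linarith
  have hp1 : (0:ℝ) ≤ 1 - p := by linarith
  constructor
  · have hexp : (p - 17 * p ^ 2) * n = 2 * k - 34 * (p * k) := by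
      have h : (p - 17 * p ^ 2) * n = p * n - 17 * (p * (p * n)) := by ring
      rw [h, hpn]; ring
    rw [hexp]
    nlinarith [mul_nonneg (by linarith : (0:ℝ) ≤ 1/34 - p) (by linarith : (0:ℝ) ≤ (k:ℝ))]
  set Ω : Finset ℕ := Finset.Icc 1 n with hΩdef
  have hΩc : Ω.card = n := by simp [hΩdef]
  have hgmem : ∀ j ∈ Ω, (if j = n then 1 else j + 1) ∈ Ω := by
    intro j hj
    rw [hΩdef, Finset.mem_Icc] at hj ⊢
    split_ifs <;> omega
  have hgne : ∀ j ∈ Ω, (if j = n then 1 else j + 1) ≠ j := by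
    intro j hj
    rw [hΩdef, Finset.mem_Icc] at hj
    split_ifs with h <;> omega
  have hμ0 : ∀ A : Finset ℕ, (0:ℝ) ≤ p ^ A.card * (1 - p) ^ (n - A.card) :=
    fun A => mul_nonneg (pow_nonneg hp0 _) (pow_nonneg hp1 _)
  have hLind : ∀ S : Finset ℕ, S ⊆ Ω →
      ∑ A ∈ Ω.powerset, p ^ A.card * (1 - p) ^ (n - A.card) *
        (if S ⊆ A then (1:ℝ) else 0) = p ^ S.card := by
    intro S hS
    have h := Lind Ω p S hS
    rwa [hΩc] at h
  have hsingle : ∀ j ∈ Ω, ∑ A ∈ Ω.powerset, p ^ A.card * (1 - p) ^ (n - A.card) *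
      (if j ∈ A then (1:ℝ) else 0) = p := by
    intro j hj
    have h := hLind {j} (Finset.singleton_subset_iff.mpr hj)
    rw [Finset.card_singleton, pow_one] at h
    refine Eq.trans (Finset.sum_congr rfl fun A _ => ?_) h
    rw [if_congr (Finset.singleton_subset_iff (a := j) (s := A)).symm rfl rfl]
  have hpair : ∀ j ∈ Ω, ∑ A ∈ Ω.powerset, p ^ A.card * (1 - p) ^ (n - A.card) *
      (if j ∈ A ∧ (if j = n then 1 else j + 1) ∈ A then (1:ℝ) else 0) = p ^ 2 := by
    intro j hj
    have hne := hgne j hj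
    have hS : ({j, if j = n then 1 else j + 1} : Finset ℕ) ⊆ Ω :=
      Finset.insert_subset hj (Finset.singleton_subset_iff.mpr (hgmem j hj))
    have hc : ({j, if j = n then 1 else j + 1} : Finset ℕ).card = 2 := by
      rw [Finset.card_insert_of_notMem (by
        rw [Finset.mem_singleton]; exact fun h => hne h.symm), Finset.card_singleton]
    have h := hLind _ hS
    rw [hc] at h
    refine Eq.trans (Finset.sum_congr rfl fun A _ => ?_) h
    rw [if_congr (show (j ∈ A ∧ (if j = n then 1 else j + 1) ∈ A) ↔
      ({j, if j = n then 1 else j + 1} : Finset ℕ) ⊆ A by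
        simp [Finset.insert_subset_iff]) rfl rfl]
  have hEcard : ∑ A ∈ Ω.powerset, p ^ A.card * (1 - p) ^ (n - A.card) * ((A.card : ℝ))
      = p * n := by
    have hrep : ∀ A ∈ Ω.powerset, ((A.card : ℝ))
        = ∑ j ∈ Ω, (if j ∈ A then (1:ℝ) else 0) := by
      intro A hA
      rw [Finset.sum_boole]
      norm_cast
      rw [Finset.filter_mem_eq_inter, Finset.inter_eq_right.mpr (Finset.mem_powerset.mp hA)]
    rw [Finset.sum_congr rfl fun A hA => by rw [hrep A hA]]
    rw [Finset.sum_congr rfl fun A _ => Finset.mul_sum _ _ _]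
    rw [Finset.sum_comm]
    rw [Finset.sum_congr rfl fun j hj => hsingle j hj]
    rw [Finset.sum_const, hΩc, nsmul_eq_mul]
    ring
  have hEpairs : ∑ A ∈ Ω.powerset, p ^ A.card * (1 - p) ^ (n - A.card) *
      (((A.filter fun j => (if j = n then 1 else j + 1) ∈ A).card : ℝ)) = p ^ 2 * n := by
    have hrep : ∀ A ∈ Ω.powerset, (((A.filter fun j => (if j = n then 1 else j + 1) ∈ A).card : ℝ))
        = ∑ j ∈ Ω, (if j ∈ A ∧ (if j = n then 1 else j + 1) ∈ A then (1:ℝ) else 0) := by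
      intro A hA
      have hAΩ := Finset.mem_powerset.mp hA
      rw [Finset.sum_boole]
      norm_cast
      congr 1
      ext x
      simp only [Finset.mem_filter]
      constructor
      · rintro ⟨h1, h2⟩; exact ⟨hAΩ h1, h1, h2⟩
      · rintro ⟨_, h1, h2⟩; exact ⟨h1, h2⟩
    rw [Finset.sum_congr rfl fun A hA => by rw [hrep A hA]]
    rw [Finset.sum_congr rfl fun A _ => Finset.mul_sum _ _ _]
    rw [Finset.sum_comm]
    rw [Finset.sum_congr rfl fun j hj => hpair j hj]
    rw [Finset.sum_const, hΩc, nsmul_eq_mul]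
    ring
  have hEprime : ∑ A ∈ Ω.powerset, p ^ A.card * (1 - p) ^ (n - A.card) * (((A' A).card : ℝ))
      = p * n - p ^ 2 * n := by
    have hsplit : ∀ A : Finset ℕ, (((A' A).card : ℝ))
        = ((A.card : ℝ)) - (((A.filter fun j => (if j = n then 1 else j + 1) ∈ A).card : ℝ)) := by
      intro A
      have h := Finset.card_filter_add_card_filter_not
        (s := A) (p := fun j => (if j = n then 1 else j + 1) ∈ A)
      rw [hA' A]
      have h' := congrArg (Nat.cast : ℕ → ℝ) h
      push_cast at h'
      linarith
    rw [Finset.sum_congr rfl fun A _ => by rw [hsplit A]]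
    rw [Finset.sum_congr rfl fun A _ => mul_sub (p ^ A.card * (1 - p) ^ (n - A.card)) _ _]
    rw [Finset.sum_sub_distrib, hEcard, hEpairs]
  have hER : ∀ i : Fin ℓ, ∑ A ∈ Ω.powerset, p ^ A.card * (1 - p) ^ (n - A.card) *
      (((R A i).card : ℝ)) ≤ 16 * p ^ 2 := by
    intro i
    set t : ℕ := (V i).card / 2 with htdef
    have ht1 : 1 ≤ t := by have := hV2 i; omega
    have htc : (V i).card ≤ 2 * (t + 1) := by omega
    have hpoint : ∀ A : Finset ℕ, (((R A i).card : ℝ))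
        ≤ ∑ S ∈ Finset.powersetCard (t + 1) (V i), (if S ⊆ A then (1:ℝ) else 0) := by
      intro A
      rw [Finset.sum_boole]
      have hnat : (R A i).card ≤ ((Finset.powersetCard (t + 1) (V i)).filter (fun S => S ⊆ A)).card := by
        rw [hR2 A i]
        have h1 : (A' A ∩ V i).card ≤ (A ∩ V i).card := by
          apply Finset.card_le_card
          exact Finset.inter_subset_inter (by rw [hA' A]; exact Finset.filter_subset _ _) le_rfl
        have h2 : (A ∩ V i).card - t ≤ (A ∩ V i).card.choose (t + 1) := choose_ge_sub _ _
        have h3 : (A ∩ V i).card.choose (t + 1) = (Finset.powersetCard (t + 1) (A ∩ V i)).card :=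
          (Finset.card_powersetCard _ _).symm
        have h4 : Finset.powersetCard (t + 1) (A ∩ V i)
            ⊆ (Finset.powersetCard (t + 1) (V i)).filter (fun S => S ⊆ A) := by
          intro S hS
          rw [Finset.mem_powersetCard] at hS
          rw [Finset.mem_filter, Finset.mem_powersetCard]
          exact ⟨⟨hS.1.trans Finset.inter_subset_right, hS.2⟩, hS.1.trans Finset.inter_subset_left⟩
        have h5 := Finset.card_le_card h4
        omega
      exact_mod_cast hnat
    calc ∑ A ∈ Ω.powerset, p ^ A.card * (1 - p) ^ (n - A.card) * (((R A i).card : ℝ))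
        ≤ ∑ A ∈ Ω.powerset, p ^ A.card * (1 - p) ^ (n - A.card) *
            (∑ S ∈ Finset.powersetCard (t + 1) (V i), (if S ⊆ A then (1:ℝ) else 0)) :=
          Finset.sum_le_sum fun A _ => mul_le_mul_of_nonneg_left (hpoint A) (hμ0 A)
      _ = ∑ S ∈ Finset.powersetCard (t + 1) (V i), ∑ A ∈ Ω.powerset,
            p ^ A.card * (1 - p) ^ (n - A.card) * (if S ⊆ A then (1:ℝ) else 0) := by
          rw [Finset.sum_congr rfl fun A _ => Finset.mul_sum _ _ _]
          exact Finset.sum_comm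
      _ = ∑ S ∈ Finset.powersetCard (t + 1) (V i), p ^ S.card :=
          Finset.sum_congr rfl fun S hS =>
            hLind S (((Finset.mem_powersetCard.mp hS).1).trans (hV i))
      _ = ((V i).card.choose (t + 1) : ℝ) * p ^ (t + 1) := by
          rw [Finset.sum_congr rfl fun S hS => by rw [(Finset.mem_powersetCard.mp hS).2]]
          rw [Finset.sum_const, Finset.card_powersetCard, nsmul_eq_mul]
      _ ≤ 16 * p ^ 2 := by
          have hc : (V i).card.choose (t + 1) ≤ 4 ^ (t + 1) := by
            calc (V i).card.choose (t + 1) ≤ 2 ^ ((V i).card) := choose_le_two_pow _ _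
              _ ≤ 2 ^ (2 * (t + 1)) := Nat.pow_le_pow_right (by norm_num) htc
              _ = 4 ^ (t + 1) := by rw [pow_mul]; norm_num
          have hcR : ((V i).card.choose (t + 1) : ℝ) ≤ (4:ℝ) ^ (t + 1) := by exact_mod_cast hc
          have hpp : (0:ℝ) ≤ p ^ (t + 1) := pow_nonneg hp0 _
          calc ((V i).card.choose (t + 1) : ℝ) * p ^ (t + 1)
              ≤ (4:ℝ) ^ (t + 1) * p ^ (t + 1) := mul_le_mul_of_nonneg_right hcR hpp
            _ = (4 * p) ^ (t + 1) := (mul_pow _ _ _).symm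
            _ ≤ (4 * p) ^ 2 := pow_le_pow_of_le_one (by linarith) (by linarith) (by omega)
            _ = 16 * p ^ 2 := by ring
  have hclaim1 : ∀ A : Finset ℕ, (((A' A).card : ℝ)) - ∑ i : Fin ℓ, (((R A i).card : ℝ))
      ≤ (((A'' A).card : ℝ)) := by
    intro A
    have h1 : A' A ⊆ A'' A ∪ Finset.univ.biUnion (R A) := by
      rw [hA'' A]
      intro x hx
      by_cases hxb : x ∈ Finset.univ.biUnion (R A)
      · exact Finset.mem_union_right _ hxb
      · exact Finset.mem_union_left _ (Finset.mem_sdiff.mpr ⟨hx, hxb⟩)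
    have h2 := Finset.card_le_card h1
    have h3 := Finset.card_union_le (A'' A) (Finset.univ.biUnion (R A))
    have h4 := Finset.card_biUnion_le (s := (Finset.univ : Finset (Fin ℓ))) (t := R A)
    have h5 : ((Finset.univ.biUnion (R A)).card : ℝ) ≤ ∑ i : Fin ℓ, (((R A i).card : ℝ)) := by
      exact_mod_cast h4
    have h6 : (((A' A).card : ℝ)) ≤ (((A'' A).card : ℝ)) + ((Finset.univ.biUnion (R A)).card : ℝ) := by
      exact_mod_cast le_trans h2 h3
    linarith
  have hlR : (ℓ:ℝ) ≤ n := by exact_mod_cast hℓ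
  calc (p - 17 * p ^ 2) * n
      ≤ (p * n - p ^ 2 * n) - (ℓ:ℝ) * (16 * p ^ 2) := by
        have h16 := mul_le_mul_of_nonneg_right hlR (by positivity : (0:ℝ) ≤ 16 * p ^ 2)
        nlinarith [h16]
    _ = (p * n - p ^ 2 * n) - ∑ _i : Fin ℓ, (16 * p ^ 2 : ℝ) := by
        rw [Finset.sum_const, Finset.card_univ, Fintype.card_fin, nsmul_eq_mul]
    _ ≤ (∑ A ∈ Ω.powerset, p ^ A.card * (1 - p) ^ (n - A.card) * (((A' A).card : ℝ)))
        - ∑ i : Fin ℓ, ∑ A ∈ Ω.powerset, p ^ A.card * (1 - p) ^ (n - A.card) * (((R A i).card : ℝ)) := by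
        rw [hEprime]
        exact sub_le_sub_left (Finset.sum_le_sum fun i _ => hER i) _
    _ = ∑ A ∈ Ω.powerset, (p ^ A.card * (1 - p) ^ (n - A.card) * (((A' A).card : ℝ))
        - p ^ A.card * (1 - p) ^ (n - A.card) * (∑ i : Fin ℓ, (((R A i).card : ℝ)))) := by
        rw [Finset.sum_comm (s := Finset.univ) (t := Ω.powerset)]
        rw [Finset.sum_sub_distrib]
        congr 1
        exact Finset.sum_congr rfl fun A _ => (Finset.mul_sum _ _ _).symm
    _ = ∑ A ∈ Ω.powerset, p ^ A.card * (1 - p) ^ (n - A.card) *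
          ((((A' A).card : ℝ)) - ∑ i : Fin ℓ, (((R A i).card : ℝ))) :=
        Finset.sum_congr rfl fun A _ => (mul_sub _ _ _).symm
    _ ≤ ∑ A ∈ Ω.powerset, p ^ A.card * (1 - p) ^ (n - A.card) * (((A'' A).card : ℝ)) :=
        Finset.sum_le_sum fun A _ => mul_le_mul_of_nonneg_left (hclaim1 A) (hμ0 A)
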